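/- (Optimal Path Extension, swap form.) Let P ++ [y] ++ [x] ++ M be a duplicate-free list enumerating all variables, let U be the set of elements of the prefix P, and suppose U is a superset of an optimal parents set of x, i.e. d(x, U) = d(x, univ \ {x}). Then Q(P ++ [x] ++ [y] ++ M) ≤ Q(P ++ [y] ++ [x] ++ M): exchanging x and y so that x immediately follows P does not increase the total score of the ordering. -/
import Mathlib


/-- `d s x U` : the score of selecting optimal parents of `x` from `U`,
defined as the minimum of `s x W` over all subsets `W ⊆ U`. -/
noncomputable def d {X : Type*} [DecidableEq X] (s : X → Finset X → ℝ)
    (x : X) (U : Finset X) : ℝ :=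
  U.powerset.inf' (Finset.powerset_nonempty U) (s x)

/-- `Qfrom s M U` : the cost of extending the lattice node `U` along the
ordering `M`, i.e. `Σ_k d(M_k, U ∪ S_k)` where `S_k` is the set of entries
of `M` preceding position `k`. -/
noncomputable def Qfrom {X : Type*} [DecidableEq X] (s : X → Finset X → ℝ) :
    List X → Finset X → ℝ
  | [], _ => 0
  | x :: M, U => d s x U + Qfrom s M (insert x U)

/-- `Q s L` : the cost of the ordering `L`, i.e. `Σ_k d(L_k, S_k)` where
`S_k` is the set of entries of `L` preceding position `k`; this is the score
of the network in which each variable's parents are chosen optimally from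
its predecessors in `L`. -/
noncomputable def Q {X : Type*} [DecidableEq X] (s : X → Finset X → ℝ)
    (L : List X) : ℝ :=
  Qfrom s L ∅

lemma d_anti {X : Type*} [DecidableEq X] (s : X → Finset X → ℝ)
    (x : X) {U V : Finset X} (h : U ⊆ V) : d s x V ≤ d s x U := by
  obtain ⟨W, hW, hWeq⟩ := Finset.exists_mem_eq_inf' (Finset.powerset_nonempty U) (s x)
  have hU : d s x U = s x W := hWeq
  have hV : d s x V ≤ s x W :=
    Finset.inf'_le _ (Finset.mem_powerset.mpr ((Finset.mem_powerset.mp hW).trans h))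
  rw [hU]; exact hV

lemma Qfrom_append {X : Type*} [DecidableEq X] (s : X → Finset X → ℝ)
    (A B : List X) (U : Finset X) :
    Qfrom s (A ++ B) U = Qfrom s A U + Qfrom s B (U ∪ A.toFinset) := by
  induction A generalizing U with
  | nil => simp [Qfrom]
  | cons a A ih =>
      simp only [List.cons_append, Qfrom, List.append_eq]
      rw [ih, List.toFinset_cons]
      have : insert a U ∪ A.toFinset = U ∪ insert a A.toFinset := by
        ext z; simp [or_assoc, or_comm, or_left_comm]
      rw [this, add_assoc]

/-- Optimal path extension, swap form: if the prefix set `U = P.toFinset` is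
a superset of an optimal parents set of `x`, then exchanging `x` and `y` so
that `x` immediately follows `P` does not increase the total score. -/
theorem optimal_path_extension_swap
    {X : Type*} [Fintype X] [DecidableEq X] [Nonempty X]
    (s : X → Finset X → ℝ) (P M : List X) (x y : X)
    (hnodup : (P ++ [y] ++ [x] ++ M).Nodup)
    (henum : ∀ z : X, z ∈ P ++ [y] ++ [x] ++ M)
    (hx : x ∉ P.toFinset)
    (hopt : d s x P.toFinset = d s x (Finset.univ \ {x})) :
    Q s (P ++ [x] ++ [y] ++ M) ≤ Q s (P ++ [y] ++ [x] ++ M) := by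
  have hxy : x ≠ y := by
    rintro rfl
    simp [List.nodup_append] at hnodup
  have hUsub : insert y P.toFinset ⊆ Finset.univ \ {x} := by
    intro z hz
    simp only [Finset.mem_insert, List.mem_toFinset] at hz
    simp only [Finset.mem_sdiff, Finset.mem_univ, Finset.mem_singleton, true_and]
    rcases hz with rfl | hz
    · exact fun h => hxy h.symm
    · intro h; subst h; exact hx (List.mem_toFinset.mpr hz)
  have key1 : d s x (insert y P.toFinset) = d s x P.toFinset := by
    have h1 : d s x (insert y P.toFinset) ≤ d s x P.toFinset :=
      d_anti s x (Finset.subset_insert _ _)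
    have h2 : d s x (Finset.univ \ {x}) ≤ d s x (insert y P.toFinset) :=
      d_anti s x hUsub
    linarith [hopt ▸ h2]
  have key2 : d s y (insert x P.toFinset) ≤ d s y P.toFinset :=
    d_anti s y (Finset.subset_insert _ _)
  have hre : ∀ a b : X, P ++ [a] ++ [b] ++ M = P ++ (a :: b :: M) := by
    intro a b; simp
  rw [Q, Q, hre, hre, Qfrom_append, Qfrom_append]
  simp only [Qfrom, Finset.empty_union]
  have hcomm : insert y (insert x P.toFinset) = insert x (insert y P.toFinset) :=
    by ext z; simp [or_left_comm]
  rw [hcomm]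
  linarith [key1, key2]
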